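/- If X and Y are n x n matrices over a field with rank(X) = x, rank(Y) = y, dim(col(X) ∩ col(Y)) = c, and dim(row(X) ∩ row(Y)) = r, then rank(X - Y) >= x + y - c - r. -/

import Mathlib

open Matrix

private lemma aux_finrank_comap {K V : Type*} [Field K] [AddCommGroup V] [Module K V]
    (p W : Submodule K V) :
    Module.finrank K ↥(Submodule.comap p.subtype W) = Module.finrank K ↥(W ⊓ p) := by
  have h : Submodule.comap p.subtype W = Submodule.comap p.subtype (W ⊓ p) := by
    rw [Submodule.comap_inf, Submodule.comap_subtype_self, inf_top_eq]
  rw [h]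
  exact (Submodule.comapSubtypeEquivOfLe inf_le_right).finrank_eq

/-- Marsaglia's bound: if `rank X = x`, `rank Y = y`, `dim (col X ⊓ col Y) = c` and
`dim (row X ⊓ row Y) = r`, then `rank (X - Y) ≥ x + y - c - r`
(stated as `x + y ≤ rank (X - Y) + c + r`). -/
theorem rank_sub_ge_marsaglia {K : Type*} [Field K] {n x y c r : ℕ}
    (X Y : Matrix (Fin n) (Fin n) K) (hx : X.rank = x) (hy : Y.rank = y)
    (hc : Module.finrank K
        ↥(LinearMap.range X.mulVecLin ⊓ LinearMap.range Y.mulVecLin) = c)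
    (hr : Module.finrank K
        ↥(LinearMap.range Xᵀ.mulVecLin ⊓ LinearMap.range Yᵀ.mulVecLin) = r) :
    x + y ≤ (X - Y).rank + c + r := by
  classical
  set f := X.mulVecLin with hf
  set g := Y.mulVecLin with hg
  set D := (X - Y).mulVecLin with hDdef
  have hD : ∀ v, D v = f v - g v := by
    intro v
    simp [hDdef, hf, hg, Matrix.mulVecLin_apply, Matrix.sub_mulVec]
  set q := (LinearMap.range f).mkQ with hq
  have hqf : ∀ v, q (f v) = 0 := by
    intro v
    rw [← LinearMap.mem_ker, Submodule.ker_mkQ]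
    exact LinearMap.mem_range_self f v
  -- the restriction of q to range D
  set h' : ↥(LinearMap.range D) →ₗ[K] (Fin n → K) ⧸ LinearMap.range f := q ∘ₗ (LinearMap.range D).subtype with hh'
  have E1 : Module.finrank K ↥(LinearMap.range D)
      = Module.finrank K ↥(LinearMap.range h') + Module.finrank K ↥(LinearMap.ker h') :=
    (LinearMap.finrank_range_add_finrank_ker h').symm
  -- range h' = map q B
  have hqD : q ∘ₗ D = -(q ∘ₗ g) := by
    refine LinearMap.ext fun v => ?_
    simp only [LinearMap.comp_apply, LinearMap.neg_apply, hD v, map_sub, hqf v, zero_sub]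
  have hmapD : Submodule.map q (LinearMap.range D) = Submodule.map q (LinearMap.range g) := by
    rw [← LinearMap.range_comp, ← LinearMap.range_comp, hqD, LinearMap.range_neg]
  have Erange : LinearMap.range h' = Submodule.map q (LinearMap.range g) := by
    rw [hh', LinearMap.range_comp, Submodule.range_subtype, hmapD]
  -- finrank B = finrank (map q B) + c
  have E3 : Module.finrank K ↥(LinearMap.range g) = Module.finrank K ↥(Submodule.map q (LinearMap.range g)) + c := by
    have h1 := LinearMap.finrank_range_add_finrank_ker (q ∘ₗ (LinearMap.range g).subtype)
    have h2 : LinearMap.range (q ∘ₗ (LinearMap.range g).subtype) = Submodule.map q (LinearMap.range g) := by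
      rw [LinearMap.range_comp, Submodule.range_subtype]
    have h3 : LinearMap.ker (q ∘ₗ (LinearMap.range g).subtype) = Submodule.comap (LinearMap.range g).subtype (LinearMap.range f) := by
      rw [LinearMap.ker_comp, hq, Submodule.ker_mkQ]
    rw [h2, h3, aux_finrank_comap, hc] at h1
    exact h1.symm
  -- ker h' has finrank = finrank (A ⊓ range D)
  have Eker : Module.finrank K ↥(LinearMap.ker h')
      = Module.finrank K ↥(LinearMap.range f ⊓ LinearMap.range D) := by
    have h3 : LinearMap.ker h' = Submodule.comap (LinearMap.range D).subtype (LinearMap.range f) := by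
      rw [hh', LinearMap.ker_comp, hq, Submodule.ker_mkQ]
    rw [h3, aux_finrank_comap]
  -- map f (ker g) ≤ A ⊓ range D
  have hle : Submodule.map f (LinearMap.ker g) ≤ LinearMap.range f ⊓ LinearMap.range D := by
    rintro _ ⟨v, hv, rfl⟩
    refine ⟨LinearMap.mem_range_self f v, ⟨v, ?_⟩⟩
    rw [hD v, LinearMap.mem_ker.mp hv, sub_zero]
  have E4 : Module.finrank K ↥(Submodule.map f (LinearMap.ker g))
      ≤ Module.finrank K ↥(LinearMap.range f ⊓ LinearMap.range D) := Submodule.finrank_mono hle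
  -- finrank (ker g) = finrank (map f (ker g)) + finrank (ker f ⊓ ker g)
  have E5 : Module.finrank K ↥(LinearMap.ker g)
      = Module.finrank K ↥(Submodule.map f (LinearMap.ker g))
        + Module.finrank K ↥(LinearMap.ker f ⊓ LinearMap.ker g) := by
    have h1 := LinearMap.finrank_range_add_finrank_ker (f ∘ₗ (LinearMap.ker g).subtype)
    have h2 : LinearMap.range (f ∘ₗ (LinearMap.ker g).subtype)
        = Submodule.map f (LinearMap.ker g) := by
      rw [LinearMap.range_comp, Submodule.range_subtype]
    have h3 : LinearMap.ker (f ∘ₗ (LinearMap.ker g).subtype)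
        = Submodule.comap (LinearMap.ker g).subtype (LinearMap.ker f) := by
      rw [LinearMap.ker_comp]
    rw [h2, h3, aux_finrank_comap] at h1
    exact h1.symm
  have hn : Module.finrank K (Fin n → K) = n := by
    simp [Module.finrank_fin_fun]
  -- rank-nullity for f and g
  have E6f : x + Module.finrank K ↥(LinearMap.ker f) = n := by
    have h1 := LinearMap.finrank_range_add_finrank_ker f
    rw [hn] at h1
    have h2 : Module.finrank K ↥(LinearMap.range f) = x := hx
    omega
  have E6g : y + Module.finrank K ↥(LinearMap.ker g) = n := by
    have h1 := LinearMap.finrank_range_add_finrank_ker g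
    rw [hn] at h1
    have h2 : Module.finrank K ↥(LinearMap.range g) = y := hy
    omega
  -- the stacked matrix
  set Z := Matrix.fromRows X Y with hZ
  have hkerZ : LinearMap.ker Z.mulVecLin = LinearMap.ker f ⊓ LinearMap.ker g := by
    ext v
    simp only [LinearMap.mem_ker, Submodule.mem_inf, Matrix.mulVecLin_apply, hZ,
      Matrix.fromRows_mulVec, hf, hg]
    constructor
    · intro h
      constructor
      · funext i; exact congrFun h (Sum.inl i)
      · funext i; exact congrFun h (Sum.inr i)
    · rintro ⟨h1, h2⟩
      funext i
      cases i with
      | inl i => exact congrFun h1 i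
      | inr i => exact congrFun h2 i
  have E7 : Z.rank + Module.finrank K ↥(LinearMap.ker f ⊓ LinearMap.ker g) = n := by
    have := LinearMap.finrank_range_add_finrank_ker Z.mulVecLin
    rw [hn, hkerZ] at this
    exact this
  -- rank Z = finrank (range Xᵀ ⊔ range Yᵀ)
  have hZT : Zᵀ = Matrix.fromCols Xᵀ Yᵀ := Matrix.transpose_fromRows X Y
  have hrangeZT : LinearMap.range (Matrix.fromCols Xᵀ Yᵀ).mulVecLin
      = LinearMap.range Xᵀ.mulVecLin ⊔ LinearMap.range Yᵀ.mulVecLin := by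
    apply le_antisymm
    · rintro _ ⟨v, rfl⟩
      have hv : v = Sum.elim (v ∘ Sum.inl) (v ∘ Sum.inr) := (Sum.elim_comp_inl_inr v).symm
      rw [Matrix.mulVecLin_apply, hv, Matrix.fromCols_mulVec_sumElim]
      exact Submodule.add_mem _
        (Submodule.mem_sup_left (LinearMap.mem_range_self _ _))
        (Submodule.mem_sup_right (LinearMap.mem_range_self _ _))
    · apply sup_le
      · rintro _ ⟨v, rfl⟩
        exact ⟨Sum.elim v 0, by
          simp [Matrix.mulVecLin_apply, Matrix.fromCols_mulVec_sumElim, Matrix.mulVec_transpose]⟩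
      · rintro _ ⟨v, rfl⟩
        exact ⟨Sum.elim 0 v, by
          simp [Matrix.mulVecLin_apply, Matrix.fromCols_mulVec_sumElim, Matrix.mulVec_transpose]⟩
  have E8 : Z.rank
      = Module.finrank K ↥(LinearMap.range Xᵀ.mulVecLin ⊔ LinearMap.range Yᵀ.mulVecLin) := by
    rw [← Matrix.rank_transpose Z, hZT]
    unfold Matrix.rank
    rw [hrangeZT]
  have E9 : Module.finrank K ↥(LinearMap.range Xᵀ.mulVecLin ⊔ LinearMap.range Yᵀ.mulVecLin)
      + r = x + y := by
    rw [← hr, Submodule.finrank_sup_add_finrank_inf_eq]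
    have h1 : Module.finrank K ↥(LinearMap.range Xᵀ.mulVecLin) = x :=
      (Matrix.rank_transpose X).trans hx
    have h2 : Module.finrank K ↥(LinearMap.range Yᵀ.mulVecLin) = y :=
      (Matrix.rank_transpose Y).trans hy
    rw [h1, h2]
  -- finishing
  have hrankD : (X - Y).rank = Module.finrank K ↥(LinearMap.range D) := rfl
  rw [hrankD, E1, Erange, Eker]
  have hBy : Module.finrank K ↥(LinearMap.range g) = y := hy
  rw [hBy] at E3
  omega
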